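/- For any reals x_1, ..., x_n (n ≥ 2), the variance of the first n−1 entries satisfies Var(x_1,...,x_{n-1}) ≤ (n/(n−1)) · Var(x_1,...,x_n). -/

import Mathlib

/-- Mean of a finite multiset of reals (0 for the empty multiset). -/
noncomputable def mMean (s : Multiset ℝ) : ℝ := s.sum / (Multiset.card s : ℝ)

/-- Variance of a finite multiset of reals (0 for the empty multiset). -/
noncomputable def mVar (s : Multiset ℝ) : ℝ :=
  ((s.map (fun x => (x - mMean s) ^ 2)).sum) / (Multiset.card s : ℝ)

lemma sq_sum_expand (t : Multiset ℝ) (c : ℝ) :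
    (t.map (fun x => (x - c)^2)).sum
      = (t.map (fun x => x^2)).sum - 2*c*t.sum + (Multiset.card t : ℝ)*c^2 := by
  induction t using Multiset.induction with
  | empty => simp
  | cons a s ih => simp [ih]; ring

lemma mean_min (t : Multiset ℝ) (c : ℝ) :
    (t.map (fun x => (x - mMean t)^2)).sum ≤ (t.map (fun x => (x - c)^2)).sum := by
  rcases eq_or_ne t 0 with h | h
  · simp [h]
  · have hm : (Multiset.card t : ℝ) ≠ 0 := by
      simpa using (Multiset.card_pos.mpr h).ne'
    have hsum : t.sum = (Multiset.card t : ℝ) * mMean t := by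
      unfold mMean
      field_simp
    rw [sq_sum_expand, sq_sum_expand, hsum]
    have hmpos : (0:ℝ) < (Multiset.card t : ℝ) := by
      exact_mod_cast Multiset.card_pos.mpr h
    nlinarith [sq_nonneg (c - mMean t), hmpos]

lemma sum_le_of_le (s t : Multiset ℝ) (h : s ≤ t) (h0 : ∀ a ∈ t, 0 ≤ a) :
    s.sum ≤ t.sum := by
  obtain ⟨u, rfl⟩ := Multiset.le_iff_exists_add.mp h
  rw [Multiset.sum_add]
  have : 0 ≤ u.sum := Multiset.sum_nonneg (fun a ha => h0 a (by simp [ha]))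
  linarith

/-- For reals `x₁,…,xₙ` with `n ≥ 2`,
`Var(x₁,…,x_{n-1}) ≤ (n/(n-1)) · Var(x₁,…,xₙ)`. -/
theorem stmt1 (n : ℕ) (hn : 2 ≤ n) (x : Fin n → ℝ) :
    mVar ((List.ofFn x).dropLast : Multiset ℝ)
      ≤ ((n : ℝ) / ((n : ℝ) - 1)) * mVar (List.ofFn x : Multiset ℝ) := by
  set L : List ℝ := List.ofFn x with hL
  set t : List ℝ := L.dropLast with ht
  have hlen : L.length = n := by simp [hL]
  have htlen : t.length = n - 1 := by simp [ht, hlen]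
  have hle : (t : Multiset ℝ) ≤ (L : Multiset ℝ) :=
    (List.dropLast_sublist L).subperm
  set μ := mMean (L : Multiset ℝ) with hμ
  have h1 : ((t : Multiset ℝ).map (fun y => (y - mMean (t:Multiset ℝ))^2)).sum
      ≤ ((t : Multiset ℝ).map (fun y => (y - μ)^2)).sum := mean_min _ _
  have h2 : ((t : Multiset ℝ).map (fun y => (y - μ)^2)).sum
      ≤ ((L : Multiset ℝ).map (fun y => (y - μ)^2)).sum := by
    apply sum_le_of_le _ _ (Multiset.map_le_map hle)
    intro a ha
    obtain ⟨b, _, rfl⟩ := Multiset.mem_map.mp ha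
    positivity
  have hn1 : (0:ℝ) < (n:ℝ) - 1 := by
    have : (2:ℝ) ≤ (n:ℝ) := by exact_mod_cast hn
    linarith
  have hcardt : (Multiset.card (t : Multiset ℝ) : ℝ) = (n:ℝ) - 1 := by
    rw [Multiset.coe_card, htlen]
    have : (1:ℕ) ≤ n := by omega
    push_cast [Nat.cast_sub this]
    ring
  have hcardL : (Multiset.card (L : Multiset ℝ) : ℝ) = (n:ℝ) := by
    rw [Multiset.coe_card, hlen]
  rw [mVar, mVar, hcardt, hcardL, ← hμ]
  rw [div_le_iff₀ hn1]
  calc ((t : Multiset ℝ).map (fun y => (y - mMean (t:Multiset ℝ))^2)).sum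
      ≤ ((L : Multiset ℝ).map (fun y => (y - μ)^2)).sum := le_trans h1 h2
    _ = (n:ℝ) / ((n:ℝ) - 1) * (((L : Multiset ℝ).map (fun y => (y - μ)^2)).sum / (n:ℝ)) * ((n:ℝ)-1) := by
        field_simp
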